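/- Let S and T be commuting contractions on a complex Hilbert space H with T pure. Let E be a complex Hilbert space, let G be the closure of the range of D_T and F the closure of the range of D_S, and let V : G → E be a linear isometry. Suppose A ∈ B(E), B ∈ B(F, E), C ∈ B(E, F) are such that the block operator [[A, B], [C, 0]] : E ⊕ F → E ⊕ F is unitary and for all h ∈ H: A(V(D_T h)) + B(D_S T* h) = V(D_T S* h) and C(V(D_T h)) = D_S h. Then for all h ∈ H and all n ∈ ℕ: V(D_T T*ⁿ S* h) = A(V(D_T T*ⁿ h)) + B(C(V(D_T T*^{n+1} h))). Equivalently, the isometry Π_V : H → ℓ²(ℕ, E), (Π_V h)(n) = V(D_T T*ⁿ h), satisfies Π_V ∘ S* = W_{A*, C*B*}* ∘ Π_V, where Φ(z) = A* + z C* B* is the transfer function of the unitary [[A,B],[C,0]]*. -/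

import Mathlib

open ContinuousLinearMap
open scoped ENNReal
open scoped InnerProductSpace

set_option linter.unusedSectionVars false
set_option maxHeartbeats 1000000

noncomputable section

section ShiftOperator

variable {E : Type*} [NormedAddCommGroup E] [InnerProductSpace ℂ E]

/-- The right-shifted sequence: `(shiftFun f) 0 = 0`, `(shiftFun f) (n+1) = f n`. -/
def shiftFun (f : ℕ → E) : ℕ → E
  | 0 => 0
  | (n + 1) => f n

lemma summable_of_lp (f : lp (fun _ : ℕ => E) 2) :
    Summable fun n => ‖(f : ∀ _ : ℕ, E) n‖ ^ (2 : ℝ) := by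
  have h := lp.memℓp f
  have h2 : (0 : ℝ) < (2 : ℝ≥0∞).toReal := by norm_num
  simpa using (memℓp_gen_iff h2).mp h

lemma summable_shiftFun (f : lp (fun _ : ℕ => E) 2) :
    Summable fun n => ‖shiftFun (f : ∀ _ : ℕ, E) n‖ ^ (2 : ℝ) := by
  have h1 : Summable fun n => ‖shiftFun (f : ∀ _ : ℕ, E) (n + 1)‖ ^ (2 : ℝ) := by
    simpa [shiftFun] using summable_of_lp f
  exact (summable_nat_add_iff
    (f := fun n => ‖shiftFun ((f : ∀ _ : ℕ, E)) n‖ ^ (2 : ℝ)) 1).mp h1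

lemma memℓp_shiftFun (f : lp (fun _ : ℕ => E) 2) : Memℓp (shiftFun (f : ∀ _ : ℕ, E)) 2 := by
  apply memℓp_gen
  simpa using summable_shiftFun f

lemma norm_shift_eq (f : lp (fun _ : ℕ => E) 2)
    (g : lp (fun _ : ℕ => E) 2) (hg : (g : ∀ _ : ℕ, E) = shiftFun (f : ∀ _ : ℕ, E)) :
    ‖g‖ = ‖f‖ := by
  have h2 : (0 : ℝ) < (2 : ℝ≥0∞).toReal := by norm_num
  rw [lp.norm_eq_tsum_rpow h2 f, lp.norm_eq_tsum_rpow h2 g]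
  congr 1
  have htsum : (∑' n, ‖shiftFun (f : ∀ _ : ℕ, E) n‖ ^ (2 : ℝ)) =
      ∑' n, ‖(f : ∀ _ : ℕ, E) n‖ ^ (2 : ℝ) := by
    rw [(summable_shiftFun f).tsum_eq_zero_add]
    simp [shiftFun]
  simp only [hg]
  simpa using htsum

/-- The unilateral shift `S` on `ℓ²(ℕ, E)`: `(S f)(0) = 0` and `(S f)(n) = f (n-1)` for
`n ≥ 1`. -/
def shiftOp (E : Type*) [NormedAddCommGroup E] [InnerProductSpace ℂ E] :
    lp (fun _ : ℕ => E) 2 →L[ℂ] lp (fun _ : ℕ => E) 2 :=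
  LinearMap.mkContinuous
    { toFun := fun f => ⟨shiftFun (f : ∀ _ : ℕ, E), memℓp_shiftFun f⟩
      map_add' := by
        intro f g
        apply lp.ext
        funext n
        show shiftFun ((f + g : lp (fun _ : ℕ => E) 2) : ∀ _ : ℕ, E) n =
          shiftFun (f : ∀ _ : ℕ, E) n + shiftFun (g : ∀ _ : ℕ, E) n
        cases n <;> simp [shiftFun, lp.coeFn_add, Pi.add_apply]
      map_smul' := by
        intro c f
        apply lp.ext
        funext n
        cases n <;> simp [shiftFun, lp.coeFn_smul, Pi.smul_apply] }
    1
    (by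
      intro f
      rw [one_mul]
      exact le_of_eq (norm_shift_eq f _ rfl))

@[simp] lemma shiftOp_apply_zero (f : lp (fun _ : ℕ => E) 2) :
    (shiftOp E f : ∀ _ : ℕ, E) 0 = 0 := rfl

@[simp] lemma shiftOp_apply_succ (f : lp (fun _ : ℕ => E) 2) (n : ℕ) :
    (shiftOp E f : ∀ _ : ℕ, E) (n + 1) = (f : ∀ _ : ℕ, E) n := rfl

end ShiftOperator

section Defect

variable {H : Type*} [NormedAddCommGroup H] [InnerProductSpace ℂ H] [CompleteSpace H]

/-- The defect operator `D_T = (I - T T*)^{1/2}` of a contraction `T`. -/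
def defect (T : H →L[ℂ] H) : H →L[ℂ] H :=
  CFC.sqrt (1 - T * adjoint T)

end Defect

section DefectClosure

variable {H : Type*} [NormedAddCommGroup H] [InnerProductSpace ℂ H] [CompleteSpace H]

/-- The closure of the range of the defect operator of `T`. -/
def defectClos (T : H →L[ℂ] H) : Submodule ℂ H :=
  (LinearMap.range (defect T : H →ₗ[ℂ] H)).topologicalClosure

/-- `D_T x`, viewed as an element of the closure of the range of `D_T`. -/
def defectElem (T : H →L[ℂ] H) (x : H) : defectClos T :=
  ⟨defect T x, Submodule.le_topologicalClosure _ (LinearMap.mem_range_self (defect T : H →ₗ[ℂ] H) x)⟩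

instance (T : H →L[ℂ] H) : CompleteSpace (defectClos T) :=
  (Submodule.isClosed_topologicalClosure _).completeSpace_coe

end DefectClosure

/-- `W` is the analytic (degree-one) Toeplitz operator on `ℓ²(ℕ, E)` with symbol
`φ(z) = a + z b`, i.e. `(W f)(0) = a (f 0)` and `(W f)(n) = a (f n) + b (f (n-1))`
for `n ≥ 1`. -/
def IsToeplitz {E : Type*} [NormedAddCommGroup E] [InnerProductSpace ℂ E]
    (a b : E →L[ℂ] E)
    (W : lp (fun _ : ℕ => E) 2 →L[ℂ] lp (fun _ : ℕ => E) 2) : Prop :=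
  ∀ f : lp (fun _ : ℕ => E) 2,
    (W f : ∀ _ : ℕ, E) 0 = a ((f : ∀ _ : ℕ, E) 0) ∧
    ∀ n : ℕ, (W f : ∀ _ : ℕ, E) (n + 1) =
      a ((f : ∀ _ : ℕ, E) (n + 1)) + b ((f : ∀ _ : ℕ, E) n)

lemma summable_inner_of_sq {E : Type*} [NormedAddCommGroup E] [InnerProductSpace ℂ E]
    (u v : ℕ → E) (hu : Summable fun n => ‖u n‖ ^ 2) (hv : Summable fun n => ‖v n‖ ^ 2) :
    Summable fun n => (⟪u n, v n⟫_ℂ) := by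
  apply Summable.of_norm
  apply Summable.of_nonneg_of_le (fun n => norm_nonneg _) (fun n => ?_) ((hu.add hv).div_const 2)
  calc ‖(⟪u n, v n⟫_ℂ)‖ ≤ ‖u n‖ * ‖v n‖ := norm_inner_le_norm _ _
    _ ≤ (‖u n‖ ^ 2 + ‖v n‖ ^ 2) / 2 := by nlinarith [sq_nonneg (‖u n‖ - ‖v n‖)]

lemma summable_sq_of_lp {E : Type*} [NormedAddCommGroup E] [InnerProductSpace ℂ E]
    (f : lp (fun _ : ℕ => E) 2) :
    Summable fun n => ‖(f : ∀ _ : ℕ, E) n‖ ^ 2 := by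
  have := summable_of_lp f
  have heq : ∀ n, ‖(f : ∀ _ : ℕ, E) n‖ ^ (2 : ℝ) = ‖(f : ∀ _ : ℕ, E) n‖ ^ 2 := fun n => by
    rw [show (2 : ℝ) = ((2 : ℕ) : ℝ) by norm_num, Real.rpow_natCast]
  simpa [heq] using this

/-- Key dilation identity (Theorem 2.2 of the paper). Let `S, T` be commuting contractions
with `T` pure, let `V : G → E` be an isometry from the closure `G` of the range of `D_T`,
and suppose `[[A, B], [C, 0]] : E ⊕ F → E ⊕ F` is unitary (where `F` is the closure of the
range of `D_S`), with `A (V (D_T h)) + B (D_S T* h) = V (D_T S* h)` and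
`C (V (D_T h)) = D_S h` for all `h`. Then `V (D_T T*ⁿ S* h) = A (V (D_T T*ⁿ h)) +
B (C (V (D_T T*ⁿ⁺¹ h)))`; equivalently, the isometry `Γ_V : H → ℓ²(ℕ, E)`,
`(Γ_V h)(n) = V (D_T T*ⁿ h)`, satisfies `Γ_V ∘ S* = W* ∘ Γ_V` for the Toeplitz operator
`W` with symbol `Φ(z) = A* + z C* B*`. -/

theorem key_dilation_identity
    {H : Type*} [NormedAddCommGroup H] [InnerProductSpace ℂ H] [CompleteSpace H]
    {E : Type*} [NormedAddCommGroup E] [InnerProductSpace ℂ E] [CompleteSpace E]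
    (S T : H →L[ℂ] H) (hS : ‖S‖ ≤ 1) (hT : ‖T‖ ≤ 1) (hST : Commute S T)
    (hpure : ∀ h : H,
      Filter.Tendsto (fun n : ℕ => ((adjoint T) ^ n) h) Filter.atTop (nhds 0))
    (V : ↥(defectClos T) →L[ℂ] E) (hV : Isometry V)
    (A : E →L[ℂ] E) (B : ↥(defectClos S) →L[ℂ] E) (C : E →L[ℂ] ↥(defectClos S))
    (hc₁ : adjoint A ∘L A + adjoint C ∘L C = 1)
    (hc₂ : adjoint B ∘L B = 1)
    (hc₃ : adjoint A ∘L B = 0)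
    (hr₁ : A ∘L adjoint A + B ∘L adjoint B = 1)
    (hr₂ : C ∘L adjoint C = 1)
    (hr₃ : A ∘L adjoint C = 0)
    (hU₁ : ∀ h : H,
      A (V (defectElem T h)) + B (defectElem S (adjoint T h)) = V (defectElem T (adjoint S h)))
    (hU₂ : ∀ h : H, C (V (defectElem T h)) = defectElem S h) :
    (∀ (h : H) (n : ℕ),
      V (defectElem T (((adjoint T) ^ n) (adjoint S h))) =
        A (V (defectElem T (((adjoint T) ^ n) h))) +
          B (C (V (defectElem T (((adjoint T) ^ (n + 1)) h))))) ∧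
    ∀ (Γ : H →L[ℂ] lp (fun _ : ℕ => E) 2)
      (W : lp (fun _ : ℕ => E) 2 →L[ℂ] lp (fun _ : ℕ => E) 2),
      (∀ (h : H) (n : ℕ),
        (Γ h : ∀ _ : ℕ, E) n = V (defectElem T (((adjoint T) ^ n) h))) →
      IsToeplitz (adjoint A) (adjoint C ∘L adjoint B) W →
      Γ ∘L adjoint S = adjoint W ∘L Γ := by

  have hST2 : S ∘L T = T ∘L S := by
    rw [← ContinuousLinearMap.mul_def, ← ContinuousLinearMap.mul_def, hST.eq]
  have hST' : adjoint T ∘L adjoint S = adjoint S ∘L adjoint T := by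
    rw [← adjoint_comp, ← adjoint_comp, hST2]
  have hswap : ∀ x : H, adjoint T (adjoint S x) = adjoint S (adjoint T x) := by
    intro x
    rw [← ContinuousLinearMap.comp_apply, hST', ContinuousLinearMap.comp_apply]
  have hcomm : ∀ (h : H) (n : ℕ),
      ((adjoint T) ^ n) (adjoint S h) = adjoint S (((adjoint T) ^ n) h) := by
    intro h n
    induction n with
    | zero => simp
    | succ n ih =>
      rw [pow_succ', ContinuousLinearMap.mul_apply, ContinuousLinearMap.mul_apply, ih, hswap]
  have hp : ∀ (h : H) (n : ℕ),
      ((adjoint T) ^ (n + 1)) h = adjoint T (((adjoint T) ^ n) h) := by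
    intro h n
    rw [pow_succ', ContinuousLinearMap.mul_apply]
  have key : ∀ (h : H) (n : ℕ),
      V (defectElem T (((adjoint T) ^ n) (adjoint S h))) =
        A (V (defectElem T (((adjoint T) ^ n) h))) +
          B (C (V (defectElem T (((adjoint T) ^ (n + 1)) h)))) := by
    intro h n
    rw [hcomm h n, ← hU₁ (((adjoint T) ^ n) h), hU₂]
    congr 2
    rw [hp]
  refine ⟨key, ?_⟩
  intro Γ W hΓ hW
  refine ContinuousLinearMap.ext fun h => ?_
  simp only [ContinuousLinearMap.comp_apply]
  apply ext_inner_left ℂ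
  intro g
  rw [ContinuousLinearMap.adjoint_inner_right, lp.inner_eq_tsum, lp.inner_eq_tsum]
  set f := Γ h with hf
  have hΓS : ∀ n, ((Γ (adjoint S h)) : ∀ _ : ℕ, E) n =
      A ((f : ∀ _ : ℕ, E) n) + B (C ((f : ∀ _ : ℕ, E) (n + 1))) := by
    intro n
    rw [hΓ, key, ← hΓ, ← hΓ]
  set a : ℕ → ℂ := fun n => ⟪(g : ∀ _ : ℕ, E) n, A ((f : ∀ _ : ℕ, E) n)⟫_ℂ with ha
  set b : ℕ → ℂ :=
    fun n => ⟪(g : ∀ _ : ℕ, E) n, B (C ((f : ∀ _ : ℕ, E) (n + 1)))⟫_ℂ with hb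
  have hsa : Summable a := by
    apply summable_inner_of_sq _ _ (summable_sq_of_lp g)
    apply Summable.of_nonneg_of_le (fun n => by positivity) (fun n => ?_)
      ((summable_sq_of_lp f).mul_left (‖A‖ ^ 2))
    calc ‖A ((f : ∀ _ : ℕ, E) n)‖ ^ 2 ≤ (‖A‖ * ‖(f : ∀ _ : ℕ, E) n‖) ^ 2 :=
          pow_le_pow_left₀ (norm_nonneg _) (A.le_opNorm _) 2
      _ = ‖A‖ ^ 2 * ‖(f : ∀ _ : ℕ, E) n‖ ^ 2 := by ring
  have hsf1 : Summable fun n => ‖(f : ∀ _ : ℕ, E) (n + 1)‖ ^ 2 :=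
    (summable_nat_add_iff (f := fun n => ‖(f : ∀ _ : ℕ, E) n‖ ^ 2) 1).mpr (summable_sq_of_lp f)
  have hcmp : Summable (fun n => (‖B‖ * ‖C‖) ^ 2 * ‖(f : ∀ _ : ℕ, E) (n + 1)‖ ^ 2) :=
    hsf1.mul_left _
  have hsb : Summable b := by
    apply summable_inner_of_sq _ _ (summable_sq_of_lp g)
    apply Summable.of_nonneg_of_le (fun n => by positivity) (fun n => ?_) hcmp
    calc ‖B (C ((f : ∀ _ : ℕ, E) (n + 1)))‖ ^ 2
        ≤ (‖B‖ * ‖C ((f : ∀ _ : ℕ, E) (n + 1))‖) ^ 2 :=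
          pow_le_pow_left₀ (norm_nonneg _) (B.le_opNorm _) 2
      _ ≤ (‖B‖ * (‖C‖ * ‖(f : ∀ _ : ℕ, E) (n + 1)‖)) ^ 2 := by
          apply pow_le_pow_left₀ (by positivity)
          exact mul_le_mul_of_nonneg_left (C.le_opNorm _) B.opNorm_nonneg
      _ = (‖B‖ * ‖C‖) ^ 2 * ‖(f : ∀ _ : ℕ, E) (n + 1)‖ ^ 2 := by ring
  have hL : (fun n => (⟪(g : ∀ _ : ℕ, E) n, ((Γ (adjoint S h)) : ∀ _ : ℕ, E) n⟫_ℂ)) =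
      fun n => a n + b n := by
    funext n
    rw [hΓS n, inner_add_right]
  obtain hW' := hW g
  have ht0 : (⟪((W g) : ∀ _ : ℕ, E) 0, (f : ∀ _ : ℕ, E) 0⟫_ℂ) = a 0 := by
    rw [hW'.1, ContinuousLinearMap.adjoint_inner_left]
  have hts : ∀ n, (⟪((W g) : ∀ _ : ℕ, E) (n + 1), (f : ∀ _ : ℕ, E) (n + 1)⟫_ℂ) =
      a (n + 1) + b n := by
    intro n
    rw [hW'.2 n, inner_add_left, ContinuousLinearMap.adjoint_inner_left]
    congr 1
    rw [ContinuousLinearMap.comp_apply, ContinuousLinearMap.adjoint_inner_left,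
      ContinuousLinearMap.adjoint_inner_left]
  have hsumW : Summable fun n => (⟪((W g) : ∀ _ : ℕ, E) n, (f : ∀ _ : ℕ, E) n⟫_ℂ) :=
    lp.summable_inner _ _
  rw [hL]
  calc ∑' n, (a n + b n) = (∑' n, a n) + ∑' n, b n := Summable.tsum_add hsa hsb
    _ = (a 0 + ∑' n, a (n + 1)) + ∑' n, b n := by rw [hsa.tsum_eq_zero_add]
    _ = a 0 + ((∑' n, a (n + 1)) + ∑' n, b n) := by ring
    _ = a 0 + ∑' n, (a (n + 1) + b n) := by
        rw [Summable.tsum_add ((summable_nat_add_iff (f := a) 1).mpr hsa) hsb]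
    _ = (⟪((W g) : ∀ _ : ℕ, E) 0, (f : ∀ _ : ℕ, E) 0⟫_ℂ) +
        ∑' n, (⟪((W g) : ∀ _ : ℕ, E) (n + 1), (f : ∀ _ : ℕ, E) (n + 1)⟫_ℂ) := by
        rw [ht0]
        exact congrArg _ (tsum_congr fun n => (hts n).symm)
    _ = ∑' n, (⟪((W g) : ∀ _ : ℕ, E) n, (f : ∀ _ : ℕ, E) n⟫_ℂ) :=
        hsumW.tsum_eq_zero_add.symm
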